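/- arXiv:1212.2191 — 3 statements merged into one kernel-verified Lean document; each statement's English description precedes it below -/
import Mathlib

section
/- Let G be an open subset of ℝ^d, T > 0, and let Y : [0,T] × ℝ^d → C([0,T]; ℝ^d) be a map, written (t,x) ↦ Y^{t,x}, such that: (i) (t,x) ↦ Y^{t,x} is continuous from [0,T] × ℝ^d into C([0,T]; ℝ^d) with the supremum norm; (ii) Y^{t,x}(s) = x for all s ∈ [0,t]. Define τ(t,x) = min(inf{s ∈ [t,T] : Y^{t,x}(s) ∉ G}, T). Then the function (t,x) ↦ τ(t,x) is lower semicontinuous on [0,T] × ℝ^d. -/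
/-- The exit time of a continuous path `Z : [0,T] → ℝ^d` from the open set `G` after
time `t`: `min(inf {s ∈ [t,T] : Z s ∉ G}, T)`, the infimum of the empty set being `+∞`. -/
noncomputable def exitTimeAfter (d : ℕ) (T : ℝ) (G : Set (EuclideanSpace ℝ (Fin d)))
    (t : ℝ) (Z : C(Set.Icc (0:ℝ) T, EuclideanSpace ℝ (Fin d))) : ℝ :=
  sInf (insert T {s : ℝ | ∃ hs : s ∈ Set.Icc (0:ℝ) T, t ≤ s ∧ Z ⟨s, hs⟩ ∉ G})

/-- If `(t,x) ↦ Y^{t,x}` is continuous from `[0,T] × ℝ^d` into `C([0,T]; ℝ^d)` with the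
supremum norm, and `Y^{t,x}(s) = x` for `s ∈ [0,t]`, then the exit time
`τ(t,x) = min(inf {s ∈ [t,T] : Y^{t,x}(s) ∉ G}, T)` is lower semicontinuous in `(t,x)`. -/
theorem exitTime_lowerSemicontinuous_in_initial_data (d : ℕ) (T : ℝ) (hT : 0 < T)
    (G : Set (EuclideanSpace ℝ (Fin d))) (hG : IsOpen G)
    (Y : Set.Icc (0:ℝ) T → EuclideanSpace ℝ (Fin d) →
      C(Set.Icc (0:ℝ) T, EuclideanSpace ℝ (Fin d)))
    (hYcont : Continuous fun p : Set.Icc (0:ℝ) T × EuclideanSpace ℝ (Fin d) => Y p.1 p.2)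
    (hYinit : ∀ (t : Set.Icc (0:ℝ) T) (x : EuclideanSpace ℝ (Fin d))
      (s : Set.Icc (0:ℝ) T), (s : ℝ) ≤ (t : ℝ) → Y t x s = x) :
    LowerSemicontinuous fun p : Set.Icc (0:ℝ) T × EuclideanSpace ℝ (Fin d) =>
      exitTimeAfter d T G (p.1 : ℝ) (Y p.1 p.2) := by
  have hE : True := trivial
  have hbdd : ∀ (t : ℝ) (Z : C(Set.Icc (0:ℝ) T, EuclideanSpace ℝ (Fin d))),
      BddBelow (insert T {s : ℝ | ∃ hs : s ∈ Set.Icc (0:ℝ) T, t ≤ s ∧ Z ⟨s, hs⟩ ∉ G}) := by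
    intro t Z
    refine ⟨0, ?_⟩
    rintro s (rfl | ⟨hs, -, -⟩)
    · exact hT.le
    · exact hs.1
  intro p c hc
  dsimp only at hc
  have hτT : exitTimeAfter d T G (p.1 : ℝ) (Y p.1 p.2) ≤ T :=
    csInf_le (hbdd _ _) (Set.mem_insert _ _)
  have hcT : c < T := lt_of_lt_of_le hc hτT
  by_cases htc : c < (p.1 : ℝ)
  · -- first case: t₀ > c. Near p, all exit times are ≥ some t' > c.
    set t' : ℝ := (c + min (p.1 : ℝ) T) / 2 with ht'
    have hct' : c < t' := by
      have : c < min (p.1 : ℝ) T := lt_min htc hcT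
      simp only [ht']; linarith
    have ht'min : t' < min (p.1 : ℝ) T := by
      have : c < min (p.1 : ℝ) T := lt_min htc hcT
      simp only [ht']; linarith
    have ht't : t' < (p.1 : ℝ) := lt_of_lt_of_le ht'min (min_le_left _ _)
    have ht'T : t' < T := lt_of_lt_of_le ht'min (min_le_right _ _)
    have hopen : IsOpen {q : Set.Icc (0:ℝ) T × EuclideanSpace ℝ (Fin d) | t' < (q.1 : ℝ)} :=
      isOpen_lt continuous_const (continuous_subtype_val.comp continuous_fst)
    filter_upwards [hopen.mem_nhds ht't] with q hq
    refine lt_of_lt_of_le hct' (le_csInf ⟨T, Set.mem_insert _ _⟩ ?_)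
    rintro b (rfl | ⟨hb, hqb, -⟩)
    · exact ht'T.le
    · exact le_trans (le_of_lt hq) hqb
  · -- second case: t₀ ≤ c.
    push_neg at htc
    set τ := exitTimeAfter d T G (p.1 : ℝ) (Y p.1 p.2) with hτ
    set c' : ℝ := (c + τ) / 2 with hc'
    have hcc' : c < c' := by simp only [hc']; linarith
    have hc'τ : c' < τ := by simp only [hc']; linarith
    have hc'T : c' ≤ T := le_trans hc'τ.le hτT
    -- all points of the path of p₀ up to time c' lie in G
    have hmem : ∀ s : Set.Icc (0:ℝ) T, (s : ℝ) ≤ c' → Y p.1 p.2 s ∈ G := by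
      have haux : ∀ s : Set.Icc (0:ℝ) T, (p.1 : ℝ) ≤ (s : ℝ) → (s : ℝ) ≤ c' →
          Y p.1 p.2 s ∈ G := by
        intro s hts hsc'
        by_contra hne
        have : (s : ℝ) ∈ insert T {s : ℝ | ∃ hs : s ∈ Set.Icc (0:ℝ) T,
            (p.1 : ℝ) ≤ s ∧ Y p.1 p.2 ⟨s, hs⟩ ∉ G} :=
          Set.mem_insert_iff.mpr (Or.inr ⟨s.2, hts, hne⟩)
        have := csInf_le (hbdd _ _) this
        exact absurd (le_trans this hsc') (not_le.mpr hc'τ)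
      intro s hsc'
      rcases le_total (s : ℝ) (p.1 : ℝ) with hs | hs
      · rw [hYinit p.1 p.2 s hs]
        have := haux p.1 le_rfl (le_trans htc hcc'.le)
        rwa [hYinit p.1 p.2 p.1 le_rfl] at this
      · exact haux s hs hsc'
    -- tube lemma
    set K : Set (Set.Icc (0:ℝ) T) := {s | (s : ℝ) ≤ c'} with hK
    have hKcompact : IsCompact K := by
      have : IsClosed K := isClosed_le continuous_subtype_val continuous_const
      exact this.isCompact
    set F : (Set.Icc (0:ℝ) T × EuclideanSpace ℝ (Fin d)) × Set.Icc (0:ℝ) T → EuclideanSpace ℝ (Fin d) :=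
      fun q => Y q.1.1 q.1.2 q.2 with hF
    have hFcont : Continuous F := by
      have : F = (fun z : C(Set.Icc (0:ℝ) T, EuclideanSpace ℝ (Fin d)) × Set.Icc (0:ℝ) T => z.1 z.2) ∘
          (fun q : (Set.Icc (0:ℝ) T × EuclideanSpace ℝ (Fin d)) × Set.Icc (0:ℝ) T => (Y q.1.1 q.1.2, q.2)) := rfl
      rw [this]
      exact continuous_eval.comp ((hYcont.comp continuous_fst).prodMk continuous_snd)
    have hsub : ({p} : Set (Set.Icc (0:ℝ) T × EuclideanSpace ℝ (Fin d))) ×ˢ K ⊆ F ⁻¹' G := by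
      rintro ⟨q, s⟩ ⟨hq, hs⟩
      simp only [Set.mem_singleton_iff] at hq
      subst hq
      exact hmem s hs
    obtain ⟨u, v, hu, hv, hpu, hKv, huv⟩ :=
      generalized_tube_lemma isCompact_singleton hKcompact (hG.preimage hFcont) hsub
    filter_upwards [hu.mem_nhds (hpu rfl)] with q hq
    refine lt_of_lt_of_le hcc' (le_csInf ⟨T, Set.mem_insert _ _⟩ ?_)
    rintro b (rfl | ⟨hb, hqb, hbG⟩)
    · exact hc'T
    · by_contra hlt
      push_neg at hlt
      have hmemuv : ((q, ⟨b, hb⟩) : (Set.Icc (0:ℝ) T × EuclideanSpace ℝ (Fin d)) × Set.Icc (0:ℝ) T) ∈ u ×ˢ v :=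
        ⟨hq, hKv (show (⟨b, hb⟩ : Set.Icc (0:ℝ) T) ∈ K from hlt.le)⟩
      exact hbG (huv hmemuv)
end

section
/- Let G be an open subset of ℝ^d, T > 0, and let Y : [0,T] × ℝ^d → C([0,T]; ℝ^d), (t,x) ↦ Y^{t,x}, satisfy: (i) (t,x) ↦ Y^{t,x} is continuous from [0,T] × ℝ^d into C([0,T]; ℝ^d) with the supremum norm; (ii) Y^{t,x}(s) = x for all s ∈ [0,t]. Let f : [0,T] × ℝ^d → [0, +∞] be Borel measurable and such that for each s ∈ [0,T] the function x ↦ f(s,x) is lower semicontinuous on ℝ^d. Define τ(t,x) = min(inf{s ∈ [t,T] : Y^{t,x}(s) ∉ G}, T) and J(t,x) = ∫_t^{τ(t,x)} f(s, Y^{t,x}(s)) ds (a Lebesgue integral with values in [0, +∞]). Then J is lower semicontinuous on [0,T] × ℝ^d. -/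
open MeasureTheory
open scoped ENNReal

/-- Let `(t,x) ↦ Y^{t,x}` be continuous from `[0,T] × ℝ^d` into `C([0,T]; ℝ^d)` with the
supremum norm, with `Y^{t,x}(s) = x` for `s ∈ [0,t]`.  Let `f : [0,T] × ℝ^d → [0,∞]` be
Borel measurable with `x ↦ f(s,x)` lower semicontinuous for each `s`.  Then the payoff
`J(t,x) = ∫_t^{τ(t,x)} f(s, Y^{t,x}(s)) ds` is lower semicontinuous on `[0,T] × ℝ^d`. -/
theorem payoff_lowerSemicontinuous (d : ℕ) (T : ℝ) (hT : 0 < T)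
    (G : Set (EuclideanSpace ℝ (Fin d))) (hG : IsOpen G)
    (Y : Set.Icc (0:ℝ) T → EuclideanSpace ℝ (Fin d) →
      C(Set.Icc (0:ℝ) T, EuclideanSpace ℝ (Fin d)))
    (hYcont : Continuous fun p : Set.Icc (0:ℝ) T × EuclideanSpace ℝ (Fin d) => Y p.1 p.2)
    (hYinit : ∀ (t : Set.Icc (0:ℝ) T) (x : EuclideanSpace ℝ (Fin d))
      (s : Set.Icc (0:ℝ) T), (s : ℝ) ≤ (t : ℝ) → Y t x s = x)
    (f : ℝ → EuclideanSpace ℝ (Fin d) → ℝ≥0∞)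
    (hf : Measurable (Function.uncurry f))
    (hflsc : ∀ s : ℝ, LowerSemicontinuous (f s)) :
    LowerSemicontinuous fun p : Set.Icc (0:ℝ) T × EuclideanSpace ℝ (Fin d) =>
      ∫⁻ s in Set.Ioc (p.1 : ℝ) (exitTimeAfter d T G (p.1 : ℝ) (Y p.1 p.2)),
        f s (Set.IccExtend hT.le (Y p.1 p.2) s) := by
  classical
  -- measurability of the integrand, for each parameter value
  have hgmeas : ∀ q : Set.Icc (0:ℝ) T × EuclideanSpace ℝ (Fin d),
      Measurable (fun s : ℝ => f s (Set.IccExtend hT.le (Y q.1 q.2) s)) := by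
    intro q
    have hZ : Continuous (Set.IccExtend hT.le (Y q.1 q.2)) :=
      (Y q.1 q.2).continuous.Icc_extend'
    exact hf.comp (measurable_id.prodMk hZ.measurable)
  -- the defining set of the exit time is bounded below
  have hbdd : ∀ (t : ℝ) (Z : C(Set.Icc (0:ℝ) T, EuclideanSpace ℝ (Fin d))),
      BddBelow (insert T {s : ℝ | ∃ hs : s ∈ Set.Icc (0:ℝ) T, t ≤ s ∧ Z ⟨s, hs⟩ ∉ G}) := by
    intro t Z
    refine ⟨0, ?_⟩
    rintro u (rfl | ⟨hs, -, -⟩)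
    · exact hT.le
    · exact hs.1
  -- continuity, for fixed `s`, of the evaluated extended path in the parameter
  have hZs : ∀ s : ℝ, Continuous (fun q : Set.Icc (0:ℝ) T × EuclideanSpace ℝ (Fin d) =>
      Set.IccExtend hT.le (Y q.1 q.2) s) := by
    intro s
    exact (continuous_eval_const (Set.projIcc 0 T hT.le s)).comp hYcont
  intro p
  intro y hy
  beta_reduce at hy
  set t : ℝ := (p.1 : ℝ) with htdef
  set τ : ℝ := exitTimeAfter d T G t (Y p.1 p.2) with hτdef
  by_cases hτt : τ ≤ t
  · -- the interval of integration is empty: the payoff is `0` and there is nothing to prove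
    rw [Set.Ioc_eq_empty (not_lt.2 hτt), Measure.restrict_empty, lintegral_zero_measure] at hy
    exact absurd hy (not_lt.2 (zero_le : (0:ℝ≥0∞) ≤ y))
  push_neg at hτt
  have hτT : τ ≤ T := csInf_le (hbdd _ _) (Set.mem_insert _ _)
  -- the path stays in `G` strictly before the exit time
  have hstay : ∀ (u : ℝ) (hu : u ∈ Set.Icc (0:ℝ) T), t ≤ u → u < τ →
      Y p.1 p.2 ⟨u, hu⟩ ∈ G := by
    intro u hu htu huτ
    by_contra hnot
    exact absurd (csInf_le (hbdd _ _) (Set.mem_insert_of_mem _ ⟨hu, htu, hnot⟩))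
      (not_le.2 huτ)
  have hxG : p.2 ∈ G := by
    have h1 := hstay t p.1.2 le_rfl hτt
    rwa [hYinit p.1 p.2 ⟨t, p.1.2⟩ le_rfl] at h1
  set g : ℝ → ℝ≥0∞ := fun s => f s (Set.IccExtend hT.le (Y p.1 p.2) s) with hgdef
  set μ' : Measure ℝ := volume.withDensity g with hμ'def
  have hμ'Ioc : ∀ a b : ℝ, μ' (Set.Ioc a b) = ∫⁻ s in Set.Ioc a b, g s :=
    fun a b => withDensity_apply g measurableSet_Ioc
  set δ : ℝ := τ - t with hδdef
  have hδ : 0 < δ := sub_pos.2 hτt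
  -- exhaust `Ioo t τ` by compactly contained intervals
  have hUnion : (⋃ n : ℕ, Set.Ioc (t + δ/(n+3)) (τ - δ/(n+3))) = Set.Ioo t τ := by
    ext s
    simp only [Set.mem_iUnion, Set.mem_Ioc, Set.mem_Ioo]
    constructor
    · rintro ⟨n, h1, h2⟩
      have hpos : 0 < δ/((n:ℝ)+3) := div_pos hδ (by positivity)
      constructor <;> linarith
    · rintro ⟨h1, h2⟩
      set c : ℝ := min (s - t) (τ - s) with hcdef
      have hc : 0 < c := lt_min (by linarith) (by linarith)
      obtain ⟨n, hn⟩ := exists_nat_gt (δ / c)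
      have hn3 : δ / c < (n:ℝ) + 3 := by linarith
      have hlt : δ/((n:ℝ)+3) < c := by
        rw [div_lt_iff₀ (by positivity)]
        rw [div_lt_iff₀ hc] at hn3
        linarith [hn3]
      have hc1 : c ≤ s - t := min_le_left _ _
      have hc2 : c ≤ τ - s := min_le_right _ _
      exact ⟨n, by linarith, by linarith⟩
  have hmono : Monotone (fun n : ℕ => Set.Ioc (t + δ/((n:ℝ)+3)) (τ - δ/((n:ℝ)+3))) := by
    intro n m hnm
    have hle : δ/((m:ℝ)+3) ≤ δ/((n:ℝ)+3) := by
      apply div_le_div_of_nonneg_left hδ.le (by positivity)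
      have : (n:ℝ) ≤ (m:ℝ) := Nat.cast_le.2 hnm
      linarith
    exact Set.Ioc_subset_Ioc (by linarith) (by linarith)
  have hsup : μ' (Set.Ioo t τ) = ⨆ n : ℕ, μ' (Set.Ioc (t + δ/((n:ℝ)+3)) (τ - δ/((n:ℝ)+3))) := by
    rw [← hUnion]
    exact (hmono.directed_le).measure_iUnion
  have hτ0 : μ' {τ} = 0 := withDensity_absolutelyContinuous volume g (measure_singleton τ)
  have hIocIoo : μ' (Set.Ioc t τ) ≤ μ' (Set.Ioo t τ) := by
    have hsub : Set.Ioc t τ ⊆ Set.Ioo t τ ∪ {τ} := by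
      intro s hs
      rcases lt_or_eq_of_le hs.2 with h | h
      · exact Or.inl ⟨hs.1, h⟩
      · exact Or.inr (by simp [h])
    calc μ' (Set.Ioc t τ) ≤ μ' (Set.Ioo t τ ∪ {τ}) := measure_mono hsub
      _ ≤ μ' (Set.Ioo t τ) + μ' {τ} := measure_union_le _ _
      _ = μ' (Set.Ioo t τ) := by rw [hτ0, add_zero]
  have hy' : y < ⨆ n : ℕ, μ' (Set.Ioc (t + δ/((n:ℝ)+3)) (τ - δ/((n:ℝ)+3))) := by
    rw [← hsup]
    refine lt_of_lt_of_le ?_ hIocIoo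
    rw [hμ'Ioc]
    exact hy
  obtain ⟨n, hn⟩ := lt_iSup_iff.1 hy'
  set a : ℝ := t + δ/((n:ℝ)+3) with hadef
  set b : ℝ := τ - δ/((n:ℝ)+3) with hbdef
  have hpos : 0 < δ/((n:ℝ)+3) := div_pos hδ (by positivity)
  have hta : t < a := by rw [hadef]; linarith
  have hbτ : b < τ := by rw [hbdef]; linarith
  have hbT : b ≤ T := le_trans hbτ.le hτT
  -- eventually, the starting time is below `a`
  have hcont1 : Continuous (fun q : Set.Icc (0:ℝ) T × EuclideanSpace ℝ (Fin d) => (q.1 : ℝ)) :=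
    continuous_subtype_val.comp continuous_fst
  have ev1 : ∀ᶠ q in nhds p, (q.1 : ℝ) < a :=
    (hcont1.tendsto p).eventually (eventually_lt_nhds hta)
  -- eventually, the exit time is at least `b`, by a compactness argument
  have ev2 : ∀ᶠ q in nhds p, b ≤ exitTimeAfter d T G (q.1 : ℝ) (Y q.1 q.2) := by
    set Kb : Set (Set.Icc (0:ℝ) T) := {u | (u : ℝ) ≤ b} with hKbdef
    have hKbclosed : IsClosed Kb := isClosed_Iic.preimage continuous_subtype_val
    have hKcpt : IsCompact ((Y p.1 p.2) '' Kb) :=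
      (hKbclosed.isCompact).image (Y p.1 p.2).continuous
    have himg : (Y p.1 p.2) '' Kb ⊆ G := by
      rintro _ ⟨u, hu, rfl⟩
      rcases le_or_gt (u : ℝ) t with h | h
      · rw [hYinit p.1 p.2 u h]; exact hxG
      · exact hstay u u.2 h.le (lt_of_le_of_lt hu hbτ)
    obtain ⟨ε, hε, hthick⟩ := hKcpt.exists_thickening_subset_open hG himg
    have hev : ∀ᶠ q in nhds p, Y q.1 q.2 ∈ Metric.ball (Y p.1 p.2) ε :=
      hYcont.tendsto p (Metric.ball_mem_nhds _ hε)
    filter_upwards [hev] with q hq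
    apply le_csInf (Set.insert_nonempty _ _)
    rintro u (rfl | ⟨hs, hts, hnot⟩)
    · exact hbT
    · by_contra hub
      push_neg at hub
      apply hnot
      apply hthick
      rw [Metric.mem_thickening_iff]
      refine ⟨Y p.1 p.2 ⟨u, hs⟩, Set.mem_image_of_mem _ hub.le, ?_⟩
      exact lt_of_le_of_lt (ContinuousMap.dist_apply_le_dist _) hq
  -- eventually, the integral over `Ioc a b` exceeds `y`: lower semicontinuity of the
  -- parametric integral, via Fatou's lemma and sequences
  have ev3 : ∀ᶠ q in nhds p,
      y < ∫⁻ s in Set.Ioc a b, f s (Set.IccExtend hT.le (Y q.1 q.2) s) := by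
    by_contra hcon
    rw [Filter.not_eventually] at hcon
    have hfreq : ∃ᶠ q in nhds p,
        q ∈ {q : Set.Icc (0:ℝ) T × EuclideanSpace ℝ (Fin d) |
          (∫⁻ s in Set.Ioc a b, f s (Set.IccExtend hT.le (Y q.1 q.2) s)) ≤ y} :=
      hcon.mono fun q hq => not_lt.1 hq
    obtain ⟨u, hu, hulim⟩ :=
      mem_closure_iff_seq_limit.1 (mem_closure_iff_frequently.2 hfreq)
    have key : (∫⁻ s in Set.Ioc a b, g s) ≤ y := by
      calc (∫⁻ s in Set.Ioc a b, g s)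
          ≤ ∫⁻ s in Set.Ioc a b, Filter.liminf
              (fun m : ℕ => f s (Set.IccExtend hT.le (Y (u m).1 (u m).2) s)) Filter.atTop := by
            refine lintegral_mono fun s => ?_
            refine (Filter.le_liminf_iff (h₁ := by isBoundedDefault) (h₂ := by isBoundedDefault)).2 fun c hc => ?_
            have htend : Filter.Tendsto (fun m : ℕ => Set.IccExtend hT.le (Y (u m).1 (u m).2) s)
                Filter.atTop (nhds (Set.IccExtend hT.le (Y p.1 p.2) s)) :=
              ((hZs s).tendsto p).comp hulim
            exact htend.eventually (hflsc s (Set.IccExtend hT.le (Y p.1 p.2) s) c hc)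
        _ ≤ Filter.liminf (fun m : ℕ =>
              ∫⁻ s in Set.Ioc a b, f s (Set.IccExtend hT.le (Y (u m).1 (u m).2) s))
              Filter.atTop := lintegral_liminf_le fun m => hgmeas (u m)
        _ ≤ y := by
            have hconst : Filter.liminf (fun _ : ℕ => y) Filter.atTop = y :=
              Filter.liminf_const y
            rw [← hconst]
            exact Filter.liminf_le_liminf (Filter.Eventually.of_forall fun m => hu m)
    have : y < y := lt_of_lt_of_le (by rwa [hμ'Ioc] at hn) key
    exact absurd this (lt_irrefl y)
  -- combine the three eventual facts
  filter_upwards [ev1, ev2, ev3] with q hq1 hq2 hq3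
  exact lt_of_lt_of_le hq3 (lintegral_mono_set (Set.Ioc_subset_Ioc hq1.le hq2))
end

section
/- Let (Ω, 𝔉, P) be a probability space, G an open subset of ℝ^d, T > 0, and U a separable metric space. Let Y : [0,T] × ℝ^d × Ω → C([0,T]; ℝ^d), written (t,x,ω) ↦ Y^{t,x}(ω), be such that: (i) for every ω ∈ Ω the map (t,x) ↦ Y^{t,x}(ω) is continuous from [0,T] × ℝ^d into C([0,T]; ℝ^d) with the supremum norm; (ii) Y^{t,x}(ω)(s) = x for all s ∈ [0,t] and all ω; (iii) for each (t,x) the map (s,ω) ↦ Y^{t,x}(ω)(s) is jointly measurable. Let α : [0,T] × Ω → U be jointly measurable, and let f : [0,T] × ℝ^d × U → [0, +∞] be Borel measurable such that for each s ∈ [0,T] and u ∈ U the function x ↦ f(s,x,u) is lower semicontinuous on ℝ^d. Define for each ω the exit time τ^{t,x}(ω) = min(inf{s ∈ [t,T] : Y^{t,x}(ω)(s) ∉ G}, T) and J(t,x) = E[ ∫_t^{τ^{t,x}} f(s, Y^{t,x}(s), α_s) ds ] ∈ [0, +∞]. Then the function (t,x) ↦ J(t,x) is lower semicontinuous on [0,T]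 × ℝ^d. -/
open MeasureTheory
open scoped ENNReal

section Aux

variable {d : ℕ} {T : ℝ}

/-- The exit set is closed. -/
lemma exitSet_closed (hT : 0 ≤ T) {G : Set (EuclideanSpace ℝ (Fin d))} (hG : IsOpen G)
    (t : ℝ) (Z : C(Set.Icc (0:ℝ) T, EuclideanSpace ℝ (Fin d))) :
    IsClosed {s : ℝ | ∃ hs : s ∈ Set.Icc (0:ℝ) T, t ≤ s ∧ Z ⟨s, hs⟩ ∉ G} := by
  have heq : {s : ℝ | ∃ hs : s ∈ Set.Icc (0:ℝ) T, t ≤ s ∧ Z ⟨s, hs⟩ ∉ G}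
      = Set.Icc (max t 0) T ∩ (fun s : ℝ => Z (Set.projIcc 0 T hT s)) ⁻¹' Gᶜ := by
    ext s
    simp only [Set.mem_setOf_eq, Set.mem_inter_iff, Set.mem_Icc, Set.mem_preimage,
      Set.mem_compl_iff, max_le_iff]
    constructor
    · rintro ⟨hs, hts, hZ⟩
      exact ⟨⟨⟨hts, hs.1⟩, hs.2⟩, by rwa [Set.projIcc_of_mem hT hs]⟩
    · rintro ⟨⟨⟨hts, h0s⟩, hsT⟩, hZ⟩
      exact ⟨⟨h0s, hsT⟩, hts, by rwa [Set.projIcc_of_mem hT ⟨h0s, hsT⟩] at hZ⟩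
  rw [heq]
  exact isClosed_Icc.inter (hG.isClosed_compl.preimage (Z.continuous.comp continuous_projIcc))

lemma bddBelow_exitSet (hT : 0 ≤ T) (G : Set (EuclideanSpace ℝ (Fin d)))
    (t : ℝ) (Z : C(Set.Icc (0:ℝ) T, EuclideanSpace ℝ (Fin d))) :
    BddBelow (insert T {s : ℝ | ∃ hs : s ∈ Set.Icc (0:ℝ) T, t ≤ s ∧ Z ⟨s, hs⟩ ∉ G}) := by
  refine ⟨0, ?_⟩
  rintro r hr
  rcases Set.mem_insert_iff.mp hr with rfl | ⟨hr', -, -⟩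
  · exact hT
  · exact hr'.1

lemma exitTimeAfter_le (hT : 0 ≤ T) (G : Set (EuclideanSpace ℝ (Fin d)))
    (t : ℝ) (Z : C(Set.Icc (0:ℝ) T, EuclideanSpace ℝ (Fin d))) :
    exitTimeAfter d T G t Z ≤ T :=
  csInf_le (bddBelow_exitSet hT G t Z) (Set.mem_insert _ _)

/-- Characterization of `a < τ`. -/
lemma lt_exitTimeAfter_iff (hT : 0 ≤ T) {G : Set (EuclideanSpace ℝ (Fin d))} (hG : IsOpen G)
    (t : ℝ) (Z : C(Set.Icc (0:ℝ) T, EuclideanSpace ℝ (Fin d))) (a : ℝ) :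
    a < exitTimeAfter d T G t Z ↔
      a < T ∧ ∀ (s : ℝ) (hs : s ∈ Set.Icc (0:ℝ) T), t ≤ s → s ≤ a → Z ⟨s, hs⟩ ∈ G := by
  constructor
  · intro h
    refine ⟨lt_of_lt_of_le h (exitTimeAfter_le hT G t Z), fun s hs hts hsa => ?_⟩
    by_contra hZ
    have hle : exitTimeAfter d T G t Z ≤ s :=
      csInf_le (bddBelow_exitSet hT G t Z) (Set.mem_insert_iff.mpr (Or.inr ⟨hs, hts, hZ⟩))
    exact absurd (h.trans_le hle) (not_lt.mpr hsa)
  · rintro ⟨haT, hall⟩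
    have hcl : IsClosed
        (insert T {s : ℝ | ∃ hs : s ∈ Set.Icc (0:ℝ) T, t ≤ s ∧ Z ⟨s, hs⟩ ∉ G}) := by
      rw [Set.insert_eq]
      exact isClosed_singleton.union (exitSet_closed hT hG t Z)
    have hmem := hcl.csInf_mem (Set.insert_nonempty _ _) (bddBelow_exitSet hT G t Z)
    rcases Set.mem_insert_iff.mp hmem with h | h
    · have hτ : exitTimeAfter d T G t Z = T := h
      rw [hτ]; exact haT
    · obtain ⟨hs, hts, hZ⟩ := h
      by_contra hle
      push_neg at hle
      exact hZ (hall _ hs hts hle)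

/-- Characterization of `s ≤ τ`. -/
lemma le_exitTimeAfter_iff (hT : 0 ≤ T) (G : Set (EuclideanSpace ℝ (Fin d)))
    (t : ℝ) (Z : C(Set.Icc (0:ℝ) T, EuclideanSpace ℝ (Fin d))) (s : ℝ) :
    s ≤ exitTimeAfter d T G t Z ↔
      s ≤ T ∧ ∀ (r : ℝ) (hr : r ∈ Set.Icc (0:ℝ) T), t ≤ r → r < s → Z ⟨r, hr⟩ ∈ G := by
  constructor
  · intro h
    refine ⟨h.trans (exitTimeAfter_le hT G t Z), fun r hr htr hrs => ?_⟩
    by_contra hZ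
    have hle : exitTimeAfter d T G t Z ≤ r :=
      csInf_le (bddBelow_exitSet hT G t Z) (Set.mem_insert_iff.mpr (Or.inr ⟨hr, htr, hZ⟩))
    exact absurd (h.trans hle) (not_le.mpr hrs)
  · rintro ⟨hsT, hall⟩
    refine le_csInf (Set.insert_nonempty _ _) ?_
    rintro b hb
    rcases Set.mem_insert_iff.mp hb with rfl | ⟨hb', htb, hZ⟩
    · exact hsT
    · by_contra hbs
      push_neg at hbs
      exact hZ (hall _ hb' htb hbs)

/-- The set of centers whose closed `c`-ball lies inside the open set `G` is measurable. -/
lemma measurableSet_closedBall_subset {G : Set (EuclideanSpace ℝ (Fin d))} (hG : IsOpen G)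
    (c : ℝ) : MeasurableSet {x : EuclideanSpace ℝ (Fin d) | Metric.closedBall x c ⊆ G} := by
  rcases Set.eq_empty_or_nonempty Gᶜ with hemp | hne
  · have hGu : G = Set.univ := Set.compl_empty_iff.mp hemp
    have : {x : EuclideanSpace ℝ (Fin d) | Metric.closedBall x c ⊆ G} = Set.univ := by
      ext x; simp [hGu]
    rw [this]; exact MeasurableSet.univ
  · have heq : {x : EuclideanSpace ℝ (Fin d) | Metric.closedBall x c ⊆ G}
        = (fun x => Metric.infDist x Gᶜ) ⁻¹' Set.Ioi c := by
      ext x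
      simp only [Set.mem_setOf_eq, Set.mem_preimage, Set.mem_Ioi]
      constructor
      · intro hsub
        obtain ⟨y, hyG, hy⟩ := hG.isClosed_compl.exists_infDist_eq_dist hne x
        rw [hy]
        by_contra hle
        push_neg at hle
        exact hyG (hsub (by rwa [Metric.mem_closedBall, dist_comm]))
      · intro hlt z hz
        by_contra hzG
        have h1 : Metric.infDist x Gᶜ ≤ dist x z := Metric.infDist_le_dist_of_mem hzG
        rw [Metric.mem_closedBall] at hz
        have h2 : Metric.infDist x Gᶜ ≤ c := h1.trans (by rwa [dist_comm])
        exact absurd hlt (not_lt.mpr h2)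
    rw [heq]
    exact (Metric.continuous_infDist_pt _).measurable measurableSet_Ioi

/-- Measurability of `{ω | ∀ r ∈ [t,a], g ω r ∈ G}` for continuous-in-`r`,
measurable-in-`ω` random fields, via a countable dense set of times. -/
lemma measurableSet_forall_Icc_mem {G : Set (EuclideanSpace ℝ (Fin d))} (hG : IsOpen G)
    {Ω : Type*} [MeasurableSpace Ω] {t a : ℝ} (hta : t ≤ a)
    (g : Ω → ℝ → EuclideanSpace ℝ (Fin d))
    (hgc : ∀ ω, ContinuousOn (g ω) (Set.Icc t a))
    (hgm : ∀ r, Measurable fun ω => g ω r) :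
    MeasurableSet {ω | ∀ r ∈ Set.Icc t a, g ω r ∈ G} := by
  classical
  set D : Set ℝ := insert a {q : ℝ | ∃ p : ℚ, (p : ℝ) = q ∧ q ∈ Set.Icc t a} with hD
  have hDc : D.Countable := by
    refine Set.Countable.insert a ?_
    exact Set.Countable.mono (fun q hq => hq.imp fun p hp => hp.1) (Set.countable_range _)
  have hDsub : D ⊆ Set.Icc t a := by
    rintro q hq
    rcases Set.mem_insert_iff.mp hq with rfl | ⟨p, rfl, hp⟩
    · exact ⟨hta, le_rfl⟩
    · exact hp
  have hDapprox : ∀ r ∈ Set.Icc t a, ∀ δ : ℝ, 0 < δ → ∃ q ∈ D, |q - r| < δ := by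
    intro r hr δ hδ
    rcases eq_or_lt_of_le hr.2 with h | h
    · exact ⟨a, Set.mem_insert _ _, by rw [h]; simpa using hδ⟩
    · obtain ⟨p, hp1, hp2⟩ := exists_rat_btwn (lt_min h (lt_add_of_pos_right r hδ))
      refine ⟨(p : ℝ), Set.mem_insert_iff.mpr (Or.inr ⟨p, rfl,
        ⟨hr.1.trans hp1.le, (hp2.trans_le (min_le_left _ _)).le⟩⟩), ?_⟩
      rw [abs_of_pos (by linarith)]
      have := hp2.trans_le (min_le_right _ _)
      linarith
  have hkey : {ω | ∀ r ∈ Set.Icc t a, g ω r ∈ G}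
      = ⋃ n : ℕ, ⋂ q ∈ D, {ω | Metric.closedBall (g ω q) (1 / (n + 1 : ℝ)) ⊆ G} := by
    ext ω
    simp only [Set.mem_setOf_eq, Set.mem_iUnion, Set.mem_iInter]
    constructor
    · intro hω
      have hKcpt : IsCompact (g ω '' Set.Icc t a) := isCompact_Icc.image_of_continuousOn (hgc ω)
      have hKG : g ω '' Set.Icc t a ⊆ G := by
        rintro _ ⟨r, hr, rfl⟩; exact hω r hr
      obtain ⟨ε, hε, hthick⟩ := hKcpt.exists_thickening_subset_open hG hKG
      obtain ⟨n, hn⟩ := exists_nat_one_div_lt hε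
      refine ⟨n, fun q hq z hz => ?_⟩
      refine hthick ?_
      rw [Metric.mem_thickening_iff]
      exact ⟨g ω q, ⟨q, hDsub hq, rfl⟩, lt_of_le_of_lt hz hn⟩
    · rintro ⟨n, hn⟩ r hr
      have h1n : (0 : ℝ) < 1 / (n + 1 : ℝ) := by positivity
      obtain ⟨δ, hδ, hδ'⟩ := Metric.continuousWithinAt_iff.mp (hgc ω r hr) _ h1n
      obtain ⟨q, hqD, hqr⟩ := hDapprox r hr δ hδ
      have hdist : dist (g ω q) (g ω r) < 1 / (n + 1 : ℝ) :=
        hδ' (hDsub hqD) (by rwa [Real.dist_eq])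
      refine hn q hqD ?_
      rw [Metric.mem_closedBall, dist_comm]
      exact hdist.le
  rw [hkey]
  refine MeasurableSet.iUnion fun n => MeasurableSet.biInter hDc fun q _ => ?_
  exact (hgm q) (measurableSet_closedBall_subset hG _)

/-- Measurability of the exit time as a function of `ω`. -/
lemma measurable_exitTimeAfter (hT : 0 ≤ T) {G : Set (EuclideanSpace ℝ (Fin d))}
    (hG : IsOpen G) {Ω : Type*} [MeasurableSpace Ω] (t : ℝ)
    (W : Ω → C(Set.Icc (0:ℝ) T, EuclideanSpace ℝ (Fin d)))
    (hW : ∀ s : Set.Icc (0:ℝ) T, Measurable fun ω => W ω s) :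
    Measurable fun ω => exitTimeAfter d T G t (W ω) := by
  apply measurable_of_Ioi
  intro a
  by_cases haT : a < T
  · by_cases hbound : max t 0 ≤ min a T
    · have heq : (fun ω => exitTimeAfter d T G t (W ω)) ⁻¹' Set.Ioi a
          = {ω | ∀ r ∈ Set.Icc (max t 0) (min a T),
              (fun ω r => W ω (Set.projIcc 0 T hT r)) ω r ∈ G} := by
        ext ω
        simp only [Set.mem_preimage, Set.mem_Ioi, Set.mem_setOf_eq]
        rw [lt_exitTimeAfter_iff hT hG t (W ω) a]
        constructor
        · rintro ⟨-, hall⟩ r hr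
          have hr0T : r ∈ Set.Icc (0:ℝ) T :=
            ⟨le_trans (le_max_right _ _) hr.1, hr.2.trans (min_le_right _ _)⟩
          have := hall r hr0T (le_trans (le_max_left _ _) hr.1) (hr.2.trans (min_le_left _ _))
          rwa [Set.projIcc_of_mem hT hr0T]
        · intro hall
          refine ⟨haT, fun s hs hts hsa => ?_⟩
          have hmem : s ∈ Set.Icc (max t 0) (min a T) :=
            ⟨max_le hts hs.1, le_min hsa hs.2⟩
          have := hall s hmem
          rwa [Set.projIcc_of_mem hT hs] at this
      rw [heq]
      refine measurableSet_forall_Icc_mem hG hbound _ (fun ω => ?_) (fun r => hW _)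
      exact ((W ω).continuous.comp (continuous_projIcc (h := hT))).continuousOn
    · have heq : (fun ω => exitTimeAfter d T G t (W ω)) ⁻¹' Set.Ioi a = Set.univ := by
        ext ω
        simp only [Set.mem_preimage, Set.mem_Ioi, Set.mem_univ, iff_true]
        rw [lt_exitTimeAfter_iff hT hG t (W ω) a]
        refine ⟨haT, fun s hs hts hsa => ?_⟩
        exact absurd (le_min hsa hs.2) fun h => hbound ((max_le hts hs.1).trans h)
      rw [heq]; exact MeasurableSet.univ
  · have heq : (fun ω => exitTimeAfter d T G t (W ω)) ⁻¹' Set.Ioi a = ∅ := by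
      ext ω
      simp only [Set.mem_preimage, Set.mem_Ioi, Set.mem_empty_iff_false, iff_false, not_lt]
      exact (exitTimeAfter_le hT G t (W ω)).trans (not_lt.mp haT)
    rw [heq]; exact MeasurableSet.empty

/-- Measurability in `ω` of the inner time-integral up to the exit time. -/
lemma measurable_inner (hT : 0 < T) {G : Set (EuclideanSpace ℝ (Fin d))} (hG : IsOpen G)
    {Ω : Type*} [MeasurableSpace Ω] {U : Type*} [MeasurableSpace U]
    (W : Ω → C(Set.Icc (0:ℝ) T, EuclideanSpace ℝ (Fin d)))
    (hW : Measurable fun q : Set.Icc (0:ℝ) T × Ω => W q.2 q.1)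
    (t : ℝ) (α : ℝ → Ω → U) (hα : Measurable fun q : ℝ × Ω => α q.1 q.2)
    (f : ℝ → EuclideanSpace ℝ (Fin d) → U → ℝ≥0∞)
    (hf : Measurable fun q : ℝ × EuclideanSpace ℝ (Fin d) × U => f q.1 q.2.1 q.2.2) :
    Measurable fun ω => ∫⁻ s in Set.Ioc t (exitTimeAfter d T G t (W ω)),
      f s (Set.IccExtend hT.le (W ω) s) (α s ω) := by
  have hτ : Measurable fun ω => exitTimeAfter d T G t (W ω) := by
    refine measurable_exitTimeAfter hT.le hG t W fun s => ?_
    exact hW.comp (measurable_const.prodMk measurable_id)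
  have hH : Measurable fun q : Ω × ℝ =>
      Set.indicator {q : Ω × ℝ | q.2 ∈ Set.Ioc t (exitTimeAfter d T G t (W q.1))}
        (fun q : Ω × ℝ => f q.2 (W q.1 (Set.projIcc 0 T hT.le q.2)) (α q.2 q.1)) q := by
    have hset : MeasurableSet {q : Ω × ℝ | q.2 ∈ Set.Ioc t (exitTimeAfter d T G t (W q.1))} := by
      have h1 : MeasurableSet {q : Ω × ℝ | t < q.2} :=
        measurableSet_lt measurable_const measurable_snd
      have h2 : MeasurableSet {q : Ω × ℝ | q.2 ≤ exitTimeAfter d T G t (W q.1)} :=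
        measurableSet_le measurable_snd (hτ.comp measurable_fst)
      exact h1.inter h2
    refine Measurable.indicator ?_ hset
    have e1 : Measurable fun q : Ω × ℝ => W q.1 (Set.projIcc 0 T hT.le q.2) :=
      hW.comp ((((continuous_projIcc (h := hT.le)).measurable).comp measurable_snd).prodMk measurable_fst)
    have e2 : Measurable fun q : Ω × ℝ => α q.2 q.1 :=
      hα.comp (measurable_snd.prodMk measurable_fst)
    exact hf.comp (measurable_snd.prodMk (e1.prodMk e2))
  have heq : (fun ω => ∫⁻ s in Set.Ioc t (exitTimeAfter d T G t (W ω)),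
      f s (Set.IccExtend hT.le (W ω) s) (α s ω))
      = fun ω => ∫⁻ s,
        Set.indicator {q : Ω × ℝ | q.2 ∈ Set.Ioc t (exitTimeAfter d T G t (W q.1))}
          (fun q : Ω × ℝ => f q.2 (W q.1 (Set.projIcc 0 T hT.le q.2)) (α q.2 q.1)) (ω, s) := by
    funext ω
    rw [← lintegral_indicator measurableSet_Ioc]
    congr 1
  rw [heq]
  exact hH.lintegral_prod_right'

end Aux

/-- Lemma 4 of the paper in abstract form.  Let `(Ω, 𝔉, P)` be a probability space,
`G ⊂ ℝ^d` open, `U` a separable metric space, and let the random field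
`(t,x,ω) ↦ Y^{t,x}(ω) ∈ C([0,T]; ℝ^d)` satisfy:
(i) for every `ω`, `(t,x) ↦ Y^{t,x}(ω)` is continuous in the supremum norm;
(ii) `Y^{t,x}(ω)(s) = x` for `s ∈ [0,t]`;
(iii) for each `(t,x)`, `(s,ω) ↦ Y^{t,x}(ω)(s)` is jointly measurable.
Let `α : [0,T] × Ω → U` be jointly measurable and `f : [0,T] × ℝ^d × U → [0,∞]` Borel
with `x ↦ f(s,x,u)` lower semicontinuous.  Then
`J(t,x) = E ∫_t^{τ^{t,x}} f(s, Y^{t,x}(s), α_s) ds` is lower semicontinuous in `(t,x)`. -/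
theorem expected_payoff_lowerSemicontinuous (d : ℕ) (T : ℝ) (hT : 0 < T)
    (G : Set (EuclideanSpace ℝ (Fin d))) (hG : IsOpen G)
    {Ω : Type*} [MeasurableSpace Ω] (P : Measure Ω) [IsProbabilityMeasure P]
    {U : Type*} [MetricSpace U] [TopologicalSpace.SeparableSpace U]
    [MeasurableSpace U] [BorelSpace U]
    (Y : Set.Icc (0:ℝ) T → EuclideanSpace ℝ (Fin d) → Ω →
      C(Set.Icc (0:ℝ) T, EuclideanSpace ℝ (Fin d)))
    (hYcont : ∀ ω : Ω,
      Continuous fun p : Set.Icc (0:ℝ) T × EuclideanSpace ℝ (Fin d) => Y p.1 p.2 ω)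
    (hYinit : ∀ (t : Set.Icc (0:ℝ) T) (x : EuclideanSpace ℝ (Fin d)) (ω : Ω)
      (s : Set.Icc (0:ℝ) T), (s : ℝ) ≤ (t : ℝ) → Y t x ω s = x)
    (hYmeas : ∀ (t : Set.Icc (0:ℝ) T) (x : EuclideanSpace ℝ (Fin d)),
      Measurable fun q : Set.Icc (0:ℝ) T × Ω => Y t x q.2 q.1)
    (α : ℝ → Ω → U) (hα : Measurable fun q : ℝ × Ω => α q.1 q.2)
    (f : ℝ → EuclideanSpace ℝ (Fin d) → U → ℝ≥0∞)
    (hf : Measurable fun q : ℝ × EuclideanSpace ℝ (Fin d) × U => f q.1 q.2.1 q.2.2)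
    (hflsc : ∀ (s : ℝ) (u : U), LowerSemicontinuous fun x => f s x u) :
    LowerSemicontinuous fun p : Set.Icc (0:ℝ) T × EuclideanSpace ℝ (Fin d) =>
      ∫⁻ ω,
        (∫⁻ s in Set.Ioc (p.1 : ℝ) (exitTimeAfter d T G (p.1 : ℝ) (Y p.1 p.2 ω)),
          f s (Set.IccExtend hT.le (Y p.1 p.2 ω) s) (α s ω)) ∂P := by
  classical
  set Inner : Set.Icc (0:ℝ) T × EuclideanSpace ℝ (Fin d) → Ω → ℝ≥0∞ :=
    fun p ω => ∫⁻ s in Set.Ioc (p.1 : ℝ) (exitTimeAfter d T G (p.1 : ℝ) (Y p.1 p.2 ω)),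
      f s (Set.IccExtend hT.le (Y p.1 p.2 ω) s) (α s ω) with hInner
  set F : Set.Icc (0:ℝ) T × EuclideanSpace ℝ (Fin d) → ℝ≥0∞ :=
    fun p => ∫⁻ ω, Inner p ω ∂P with hF
  -- reduce to a sequential statement
  have key : ∀ (p₀ : Set.Icc (0:ℝ) T × EuclideanSpace ℝ (Fin d))
      (u : ℕ → Set.Icc (0:ℝ) T × EuclideanSpace ℝ (Fin d)),
      Filter.Tendsto u Filter.atTop (nhds p₀) →
      F p₀ ≤ Filter.liminf (fun n => F (u n)) Filter.atTop := by
    intro p₀ u hu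
    -- measurability of the inner integrals
    have hInnerMeas : ∀ n, Measurable (Inner (u n)) := by
      intro n
      exact measurable_inner hT hG (fun ω => Y (u n).1 (u n).2 ω) (hYmeas _ _)
        ((u n).1 : ℝ) α hα f hf
    -- pointwise (in ω) lower semicontinuity along the sequence
    have hptω : ∀ ω, Inner p₀ ω ≤ Filter.liminf (fun n => Inner (u n) ω) Filter.atTop := by
      intro ω
      set Z : ℕ → C(Set.Icc (0:ℝ) T, EuclideanSpace ℝ (Fin d)) :=
        fun n => Y (u n).1 (u n).2 ω with hZdef
      set Z₀ : C(Set.Icc (0:ℝ) T, EuclideanSpace ℝ (Fin d)) := Y p₀.1 p₀.2 ω with hZ₀def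
      have hZ : Filter.Tendsto Z Filter.atTop (nhds Z₀) :=
        ((hYcont ω).tendsto p₀).comp hu
      set τ : ℕ → ℝ := fun n => exitTimeAfter d T G ((u n).1 : ℝ) (Z n) with hτdef
      set τ₀ : ℝ := exitTimeAfter d T G (p₀.1 : ℝ) Z₀ with hτ₀def
      -- rewrite the inner integral using indicators
      set ind : ℕ → ℝ → ℝ≥0∞ := fun n s =>
        (Set.Ioc ((u n).1 : ℝ) (τ n)).indicator
          (fun s => f s (Set.IccExtend hT.le (Z n) s) (α s ω)) s with hinddef
      set ind₀ : ℝ → ℝ≥0∞ := fun s =>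
        (Set.Ioc ((p₀.1 : ℝ)) τ₀).indicator
          (fun s => f s (Set.IccExtend hT.le Z₀ s) (α s ω)) s with hind₀def
      have hindeq : ∀ n, Inner (u n) ω = ∫⁻ s, ind n s :=
        fun n => (lintegral_indicator measurableSet_Ioc _).symm
      have hind₀eq : Inner p₀ ω = ∫⁻ s, ind₀ s :=
        (lintegral_indicator measurableSet_Ioc _).symm
      have hmeas_s : ∀ n, Measurable (ind n) := by
        intro n
        refine Measurable.indicator ?_ measurableSet_Ioc
        refine hf.comp (measurable_id.prodMk (Measurable.prodMk ?_ ?_))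
        · exact ((Z n).continuous.comp (continuous_projIcc (h := hT.le))).measurable
        · exact hα.comp (measurable_id.prodMk measurable_const)
      -- a.e. pointwise bound in s
      have hae : ∀ᵐ s : ℝ, s ≠ τ₀ := by
        have := Set.Countable.ae_notMem (Set.countable_singleton τ₀) (volume : Measure ℝ)
        simpa using this
      have hpt : ∀ s : ℝ, s ≠ τ₀ →
          ind₀ s ≤ Filter.liminf (fun n => ind n s) Filter.atTop := by
        intro s hneq
        by_cases hs : s ∈ Set.Ioc ((p₀.1 : ℝ)) τ₀
        · have hsτ : s < τ₀ := lt_of_le_of_ne hs.2 hneq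
          have hτ₀T : τ₀ ≤ T := exitTimeAfter_le hT.le G _ Z₀
          have hsT : s < T := lt_of_lt_of_le hsτ hτ₀T
          have hs0 : (0:ℝ) ≤ s := le_of_lt (lt_of_le_of_lt p₀.1.2.1 hs.1)
          have hsmem : s ∈ Set.Icc (0:ℝ) T := ⟨hs0, hsT.le⟩
          have hALL := ((lt_exitTimeAfter_iff hT.le hG ((p₀.1 : ℝ)) Z₀ s).mp hsτ).2
          -- all points of the path up to time s lie in G
          have hG0 : ∀ r : Set.Icc (0:ℝ) T, (r : ℝ) ≤ s → Z₀ r ∈ G := by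
            intro r hrs
            by_cases hrt : (p₀.1 : ℝ) ≤ (r : ℝ)
            · exact hALL r r.2 hrt hrs
            · push_neg at hrt
              have hx₀ : Z₀ p₀.1 ∈ G := by
                have := hALL (p₀.1 : ℝ) p₀.1.2 le_rfl hs.1.le
                simpa using this
              have h1 : Z₀ r = p₀.2 := hYinit p₀.1 p₀.2 ω r hrt.le
              have h2 : Z₀ p₀.1 = p₀.2 := hYinit p₀.1 p₀.2 ω p₀.1 le_rfl
              rw [h1, ← h2]
              exact hx₀
          set K : Set (EuclideanSpace ℝ (Fin d)) :=
            (fun r : Set.Icc (0:ℝ) T => Z₀ r) '' {r : Set.Icc (0:ℝ) T | (r : ℝ) ≤ s} with hK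
          have hKcpt : IsCompact K := by
            refine IsCompact.image ?_ Z₀.continuous
            exact (isClosed_le continuous_subtype_val continuous_const).isCompact
          have hKG : K ⊆ G := by
            rintro _ ⟨r, hr, rfl⟩; exact hG0 r hr
          obtain ⟨ε, hε, hthick⟩ := hKcpt.exists_thickening_subset_open hG hKG
          have hev1 : ∀ᶠ n in Filter.atTop, Z n ∈ Metric.ball Z₀ ε :=
            hZ (Metric.ball_mem_nhds Z₀ hε)
          have hcoe : Filter.Tendsto (fun n => ((u n).1 : ℝ)) Filter.atTop (nhds (p₀.1 : ℝ)) :=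
            ((continuous_subtype_val.tendsto p₀.1).comp
              ((continuous_fst.tendsto p₀).comp hu))
          have hev2 : ∀ᶠ n in Filter.atTop, ((u n).1 : ℝ) < s :=
            hcoe.eventually_lt_const hs.1
          -- eventually s is in the interval and the value of the indicator is an evaluation
          have hev3 : ∀ᶠ n in Filter.atTop,
              ind n s = f s (Z n ⟨s, hsmem⟩) (α s ω) := by
            filter_upwards [hev1, hev2] with n h1 h2
            have hsτn : s ≤ τ n := by
              rw [le_exitTimeAfter_iff hT.le G ((u n).1 : ℝ) (Z n) s]
              refine ⟨hsT.le, fun r hr htr hrs => ?_⟩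
              refine hthick ?_
              rw [Metric.mem_thickening_iff]
              refine ⟨Z₀ ⟨r, hr⟩, ⟨⟨r, hr⟩, hrs.le, rfl⟩, ?_⟩
              calc dist (Z n ⟨r, hr⟩) (Z₀ ⟨r, hr⟩) ≤ dist (Z n) Z₀ :=
                    ContinuousMap.dist_apply_le_dist _
                _ < ε := Metric.mem_ball.mp h1
            have hmem : s ∈ Set.Ioc ((u n).1 : ℝ) (τ n) := ⟨h2, hsτn⟩
            rw [hinddef]
            simp only
            rw [Set.indicator_of_mem hmem, Set.IccExtend_of_mem hT.le (Z n) hsmem]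
          have hval₀ : ind₀ s = f s (Z₀ ⟨s, hsmem⟩) (α s ω) := by
            rw [hind₀def]
            simp only
            rw [Set.indicator_of_mem hs, Set.IccExtend_of_mem hT.le Z₀ hsmem]
          rw [hval₀]
          rw [Filter.le_liminf_iff]
          intro y hy
          have hZs : Filter.Tendsto (fun n => Z n ⟨s, hsmem⟩) Filter.atTop
              (nhds (Z₀ ⟨s, hsmem⟩)) :=
            ((continuous_eval_const (⟨s, hsmem⟩ : Set.Icc (0:ℝ) T)).tendsto
              Z₀).comp hZ
          have hflt : ∀ᶠ n in Filter.atTop, y < f s (Z n ⟨s, hsmem⟩) (α s ω) :=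
            hZs.eventually (hflsc s (α s ω) (Z₀ ⟨s, hsmem⟩) y hy)
          filter_upwards [hflt, hev3] with n h1 h2
          rw [h2]; exact h1
        · rw [hind₀def]
          simp only
          rw [Set.indicator_of_notMem hs]
          exact zero_le
      calc Inner p₀ ω = ∫⁻ s, ind₀ s := hind₀eq
        _ ≤ ∫⁻ s, Filter.liminf (fun n => ind n s) Filter.atTop :=
            lintegral_mono_ae (hae.mono hpt)
        _ ≤ Filter.liminf (fun n => ∫⁻ s, ind n s) Filter.atTop :=
            lintegral_liminf_le hmeas_s
        _ = Filter.liminf (fun n => Inner (u n) ω) Filter.atTop := by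
            refine Filter.liminf_congr ?_
            exact Filter.Eventually.of_forall fun n => (hindeq n).symm
    calc F p₀ = ∫⁻ ω, Inner p₀ ω ∂P := rfl
      _ ≤ ∫⁻ ω, Filter.liminf (fun n => Inner (u n) ω) Filter.atTop ∂P :=
          lintegral_mono hptω
      _ ≤ Filter.liminf (fun n => ∫⁻ ω, Inner (u n) ω ∂P) Filter.atTop :=
          lintegral_liminf_le hInnerMeas
      _ = Filter.liminf (fun n => F (u n)) Filter.atTop := rfl
  -- from the sequential statement to lower semicontinuity
  intro p₀ c hc
  by_contra hcon
  rw [Filter.not_eventually] at hcon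
  obtain ⟨u, hu, hufa⟩ := Filter.exists_seq_forall_of_frequently hcon
  have hle : ∀ n, F (u n) ≤ c := fun n => not_lt.mp (hufa n)
  have h1 : Filter.liminf (fun n => F (u n)) Filter.atTop ≤ c := by
    have h2 : Filter.liminf (fun n => F (u n)) Filter.atTop ≤
        Filter.liminf (fun _ : ℕ => c) Filter.atTop :=
      Filter.liminf_le_liminf (Filter.Eventually.of_forall hle)
    rwa [Filter.liminf_const] at h2
  exact absurd ((hc.trans_le (key p₀ u hu)).trans_le h1) (lt_irrefl c)
end
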